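/- In every state reachable by an execution of the NE algorithm, the following invariant holds: for every vertex v in the core set C, every neighbor of v in G lies in C ∪ S_1 ∪ … ∪ S_k; moreover, if the execution has so far performed operations only of phases 1, …, i, then every neighbor of every core vertex lies in C ∪ S_1 ∪ … ∪ S_i. -/

import Mathlib

/-!
Model of the NE (neighborhood expansion) edge-partitioning algorithm.

A state consists of a core set `C` and secondary sets `S_1, …, S_k`
(all initially empty).  During phase `i` the operations are
`moveToSecondary i u` (requires `u ∉ C ∪ S i`, adds `u` to `S i`) and
`moveToCore i v` (requires `v ∉ C`, where `v` is chosen from `S i \ C`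
if that set is nonempty; adds `v` to `C` and then moves every neighbor
`u` of `v` with `u ∉ C ∪ S i` to `S i`).  The adjacency list of a vertex
`x` is accessed exactly when `moveToCore i x` or `moveToSecondary i x`
is performed.  An execution is a finite sequence of such operations from
the initial state whose phases are monotonically non-decreasing.
-/

/-- An operation of the NE algorithm, recording the phase and the vertex
whose adjacency list is accessed. -/
inductive NEOp (V : Type*) (k : ℕ) where
  | moveToCore (i : Fin k) (v : V)
  | moveToSecondary (i : Fin k) (v : V)
  deriving DecidableEq

/-- The phase during which an operation is performed. -/
def NEOp.phase {V : Type*} {k : ℕ} : NEOp V k → Fin k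
  | .moveToCore i _ => i
  | .moveToSecondary i _ => i

/-- A state of the NE algorithm: the core set `C` and the secondary sets
`S_1, …, S_k`. -/
structure NEState (V : Type*) (k : ℕ) where
  core : Finset V
  sec : Fin k → Finset V

/-- The initial state: everything is empty. -/
def NEState.init (V : Type*) (k : ℕ) : NEState V k := ⟨∅, fun _ => ∅⟩

variable {V : Type*} [DecidableEq V] [Fintype V]

/-- The transition relation of the NE algorithm. -/
inductive NEStep (G : SimpleGraph V) [DecidableRel G.Adj] {k : ℕ} :
    NEState V k → NEOp V k → NEState V k → Prop
  | moveToSecondary (σ : NEState V k) (i : Fin k) (u : V)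
      (hu : u ∉ σ.core ∪ σ.sec i) :
      NEStep G σ (.moveToSecondary i u)
        ⟨σ.core, Function.update σ.sec i (insert u (σ.sec i))⟩
  | moveToCore (σ : NEState V k) (i : Fin k) (v : V)
      (hv : v ∉ σ.core)
      (hchoice : (σ.sec i \ σ.core).Nonempty → v ∈ σ.sec i \ σ.core) :
      NEStep G σ (.moveToCore i v)
        ⟨insert v σ.core,
         Function.update σ.sec i
           (σ.sec i ∪ (G.neighborFinset v \ (insert v σ.core ∪ σ.sec i)))⟩

/-- `NEExec G σ ops σ'` : starting in state `σ`, performing the sequence of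
operations `ops` leads to state `σ'`. -/
inductive NEExec (G : SimpleGraph V) [DecidableRel G.Adj] {k : ℕ} :
    NEState V k → List (NEOp V k) → NEState V k → Prop
  | nil (σ : NEState V k) : NEExec G σ [] σ
  | cons {σ σ' σ'' : NEState V k} {op : NEOp V k} {ops : List (NEOp V k)} :
      NEStep G σ op σ' → NEExec G σ' ops σ'' → NEExec G σ (op :: ops) σ''

theorem NE_aux (G : SimpleGraph V) [DecidableRel G.Adj] {k : ℕ}
    {σ₀ σ : NEState V k} {ops : List (NEOp V k)}
    (h : NEExec G σ₀ ops σ) (P : Fin k → Prop)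
    (hph : ∀ op ∈ ops, P op.phase)
    (h0 : ∀ v ∈ σ₀.core, ∀ u : V, G.Adj v u →
      u ∈ σ₀.core ∨ ∃ j, P j ∧ u ∈ σ₀.sec j) :
    ∀ v ∈ σ.core, ∀ u : V, G.Adj v u →
      u ∈ σ.core ∨ ∃ j, P j ∧ u ∈ σ.sec j := by
  induction h with
  | nil _ => exact h0
  | @cons τ τ' τ'' op ops' hstep hrest ih =>
    apply ih (fun o ho => hph o (List.mem_cons_of_mem _ ho))
    cases hstep with
    | moveToSecondary p u hu =>
      intro v hv w hw
      rcases h0 v hv w hw with hc | ⟨j, hj, hs⟩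
      · exact Or.inl hc
      · refine Or.inr ⟨j, hj, ?_⟩
        by_cases hji : j = p
        · subst hji
          simp only [Function.update_self, Finset.mem_insert]
          exact Or.inr hs
        · simpa [Function.update_of_ne hji] using hs
    | moveToCore p v hv hchoice =>
      intro x hx w hw
      simp only [Finset.mem_insert] at hx
      rcases hx with rfl | hx
      · -- x = v, w is a neighbor of v
        by_cases hwmem : w ∈ insert x τ.core ∪ τ.sec p
        · rcases Finset.mem_union.mp hwmem with hc | hs
          · exact Or.inl hc
          · refine Or.inr ⟨p, hph _ List.mem_cons_self, ?_⟩
            simp only [Function.update_self, Finset.mem_union]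
            exact Or.inl hs
        · refine Or.inr ⟨p, hph _ List.mem_cons_self, ?_⟩
          simp only [Function.update_self, Finset.mem_union]
          refine Or.inr (Finset.mem_sdiff.mpr ⟨?_, hwmem⟩)
          exact (SimpleGraph.mem_neighborFinset G x w).mpr hw
      · rcases h0 x hx w hw with hc | ⟨j, hj, hs⟩
        · exact Or.inl (Finset.mem_insert_of_mem hc)
        · refine Or.inr ⟨j, hj, ?_⟩
          by_cases hji : j = p
          · subst hji
            simp only [Function.update_self, Finset.mem_union]
            exact Or.inl hs
          · simpa [Function.update_of_ne hji] using hs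

/-- In every state reachable by an execution of the NE
algorithm the following invariant holds: every neighbor of a core vertex lies
in `C ∪ S_1 ∪ … ∪ S_k`; moreover, if the execution has so far performed
operations only of phases `1, …, i`, then every neighbor of every core vertex
lies in `C ∪ S_1 ∪ … ∪ S_i`. -/
theorem ne_core_neighbors_covered
    (G : SimpleGraph V) [DecidableRel G.Adj] {k : ℕ}
    (ops : List (NEOp V k)) (σ : NEState V k)
    (hexec : NEExec G (NEState.init V k) ops σ)
    (hord : ops.Chain' fun a b => a.phase ≤ b.phase) :
    (∀ v ∈ σ.core, ∀ u : V, G.Adj v u →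
        u ∈ σ.core ∨ ∃ j : Fin k, u ∈ σ.sec j) ∧
    (∀ i : Fin k, (∀ op ∈ ops, op.phase ≤ i) →
        ∀ v ∈ σ.core, ∀ u : V, G.Adj v u →
          u ∈ σ.core ∨ ∃ j : Fin k, j ≤ i ∧ u ∈ σ.sec j) := by
  constructor
  · intro v hv u hu
    rcases NE_aux G hexec (fun _ => True) (fun _ _ => trivial)
        (by intro v hv; simp [NEState.init] at hv) v hv u hu with hc | ⟨j, _, hs⟩
    · exact Or.inl hc
    · exact Or.inr ⟨j, hs⟩
  · intro i hi
    exact NE_aux G hexec (fun j => j ≤ i) hi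
      (by intro v hv; simp [NEState.init] at hv)
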